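/- arXiv:1607.01140 — 2 statements merged into one kernel-verified Lean document; each statement's English description precedes it below -/
import Mathlib

section
/- Let H = X⊗I₂⊗X + I₂⊗X⊗X, let ρ₀ = ½|ψ₊⟩⟨ψ₊|⊗|+⟩⟨+| + ½|φ₊⟩⟨φ₊|⊗|−⟩⟨−| with ψ₊ = (|01⟩+|10⟩)/√2 and φ₊ = (|00⟩+|11⟩)/√2, and let ρ_t = exp(−itH) ρ₀ exp(itH). Then for every real t, the state ρ_t is classically correlated as measured on C, in the same fixed basis at all times: with P = |+⟩⟨+|, one has (I₄⊗P)ρ_t(I₄⊗P) + (I₄⊗(I₂−P))ρ_t(I₄⊗(I₂−P)) = ρ_t for all t ∈ ℝ (zero discord D_{AB|C} at all times). -/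
/-!
STATEMENT 7: With `H = X⊗I₂⊗X + I₂⊗X⊗X`,
`ρ₀ = ½|ψ₊⟩⟨ψ₊|⊗|+⟩⟨+| + ½|φ₊⟩⟨φ₊|⊗|−⟩⟨−|` and `ρ_t = exp(−itH) ρ₀ exp(itH)`,
for every real `t` the von Neumann measurement on C with `P = |+⟩⟨+|` leaves `ρ_t`
unchanged: `(I₄⊗P)ρ_t(I₄⊗P) + (I₄⊗(I₂−P))ρ_t(I₄⊗(I₂−P)) = ρ_t` (zero discord
`D_{AB|C}` in the same fixed basis at all times).
-/

open Matrix
open scoped Kronecker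

noncomputable section

/-- The Pauli-x matrix. -/
def X : Matrix (Fin 2) (Fin 2) ℂ := !![0, 1; 1, 0]

/-- The 2×2 identity matrix. -/
def Id2 : Matrix (Fin 2) (Fin 2) ℂ := 1

/-- `H = X⊗I₂⊗X + I₂⊗X⊗X` (tensor factors ordered A, B, C). -/
def HH : Matrix (Fin 2 × Fin 2 × Fin 2) (Fin 2 × Fin 2 × Fin 2) ℂ :=
  X ⊗ₖ (Id2 ⊗ₖ X) + Id2 ⊗ₖ (X ⊗ₖ X)

/-- Standard basis vector `|0⟩` of ℂ². -/
def ket0 : Fin 2 → ℂ := ![1, 0]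

/-- Standard basis vector `|1⟩` of ℂ². -/
def ket1 : Fin 2 → ℂ := ![0, 1]

/-- `|ab⟩ = |a⟩⊗|b⟩ ∈ ℂ⁴` (Kronecker product of vectors). -/
def kron2 (u v : Fin 2 → ℂ) : Fin 2 × Fin 2 → ℂ := fun p => u p.1 * v p.2

/-- `|+⟩ = (|0⟩ + |1⟩)/√2`. -/
def plus : Fin 2 → ℂ := ((Real.sqrt 2 : ℂ))⁻¹ • (ket0 + ket1)

/-- `|−⟩ = (|0⟩ − |1⟩)/√2`. -/
def minus : Fin 2 → ℂ := ((Real.sqrt 2 : ℂ))⁻¹ • (ket0 - ket1)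

/-- Bell state `ψ₊ = (|01⟩ + |10⟩)/√2`. -/
def psiPlus : Fin 2 × Fin 2 → ℂ :=
  ((Real.sqrt 2 : ℂ))⁻¹ • (kron2 ket0 ket1 + kron2 ket1 ket0)

/-- Bell state `φ₊ = (|00⟩ + |11⟩)/√2`. -/
def phiPlus : Fin 2 × Fin 2 → ℂ :=
  ((Real.sqrt 2 : ℂ))⁻¹ • (kron2 ket0 ket0 + kron2 ket1 ket1)

/-- Tensor product of a two-qubit (AB) vector with a one-qubit (C) vector. -/
def joinABC (w : Fin 2 × Fin 2 → ℂ) (v : Fin 2 → ℂ) : Fin 2 × Fin 2 × Fin 2 → ℂ :=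
  fun p => w (p.1, p.2.1) * v p.2.2

/-- The outer product (projector) `|v⟩⟨v|`. -/
def outer {n : Type*} (v : n → ℂ) : Matrix n n ℂ := vecMulVec v (star v)

/-- `ρ₀ = ½|ψ₊⟩⟨ψ₊|⊗|+⟩⟨+| + ½|φ₊⟩⟨φ₊|⊗|−⟩⟨−|`. -/
def rho0 : Matrix (Fin 2 × Fin 2 × Fin 2) (Fin 2 × Fin 2 × Fin 2) ℂ :=
  (1 / 2 : ℂ) • outer (joinABC psiPlus plus) + (1 / 2 : ℂ) • outer (joinABC phiPlus minus)

/-- `ρ_t = exp(−itH) ρ₀ exp(itH)`. -/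
def rho (t : ℝ) : Matrix (Fin 2 × Fin 2 × Fin 2) (Fin 2 × Fin 2 × Fin 2) ℂ :=
  NormedSpace.exp ((-(Complex.I * (t : ℂ))) • HH) * rho0 *
    NormedSpace.exp ((Complex.I * (t : ℂ)) • HH)

/-- `I₄ ⊗ P`: the operator acting as `P` on subsystem C and trivially on A, B. -/
def embedC (P : Matrix (Fin 2) (Fin 2) ℂ) :
    Matrix (Fin 2 × Fin 2 × Fin 2) (Fin 2 × Fin 2 × Fin 2) ℂ :=
  Id2 ⊗ₖ (Id2 ⊗ₖ P)

/-- The state after a von Neumann measurement `{P, I₂ − P}` on subsystem C. -/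
def measC (P : Matrix (Fin 2) (Fin 2) ℂ)
    (ρ : Matrix (Fin 2 × Fin 2 × Fin 2) (Fin 2 × Fin 2 × Fin 2) ℂ) :
    Matrix (Fin 2 × Fin 2 × Fin 2) (Fin 2 × Fin 2 × Fin 2) ℂ :=
  embedC P * ρ * embedC P + embedC (Id2 - P) * ρ * embedC (Id2 - P)


section Aux

lemma sq2' : ((Real.sqrt 2 : ℂ))⁻¹ * ((Real.sqrt 2 : ℂ))⁻¹ = (2:ℂ)⁻¹ := by
  have h : (Real.sqrt 2 : ℂ) * (Real.sqrt 2 : ℂ) = 2 := by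
    norm_cast
    rw [Real.mul_self_sqrt] <;> norm_num
  rw [← mul_inv, h]

lemma cconj' : (starRingEnd ℂ) ((Real.sqrt 2 : ℂ))⁻¹ = ((Real.sqrt 2 : ℂ))⁻¹ := by
  simp [Complex.conj_ofReal]

lemma mul_vecMulVec' {n : Type*} [Fintype n] (Q : Matrix n n ℂ) (u w : n → ℂ) :
    Q * vecMulVec u w = vecMulVec (Q.mulVec u) w := by
  ext i j
  simp [mul_apply, vecMulVec_apply, mulVec, dotProduct, Finset.sum_mul, mul_assoc]

lemma outer_conjT' {n : Type*} (v : n → ℂ) : (outer v)ᴴ = outer v := by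
  ext i j
  simp [outer, vecMulVec_apply, conjTranspose_apply, mul_comm]

lemma X_mulVec_plus' : X.mulVec plus = plus := by
  ext i
  fin_cases i <;>
    simp [X, plus, ket0, ket1, mulVec, dotProduct, Fin.sum_univ_two]

lemma P_mulVec_plus' : (outer plus).mulVec plus = plus := by
  ext i
  simp only [outer, vecMulVec_apply, mulVec, dotProduct, Fin.sum_univ_two,
    Pi.star_apply, plus, ket0, ket1, Pi.smul_apply, Pi.add_apply, smul_eq_mul,
    star_mul', RCLike.star_def, cconj']
  fin_cases i <;> simp [mul_comm, mul_assoc, mul_left_comm, sq2'] <;> ring_nf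

lemma P_mulVec_minus' : (outer plus).mulVec minus = 0 := by
  ext i
  simp only [outer, vecMulVec_apply, mulVec, dotProduct, Fin.sum_univ_two,
    Pi.star_apply, plus, minus, ket0, ket1, Pi.smul_apply, Pi.add_apply, Pi.sub_apply,
    smul_eq_mul, star_mul', RCLike.star_def, cconj', Pi.zero_apply]
  fin_cases i <;> simp <;> ring

lemma Xherm' : Xᴴ = X := by
  ext i j
  fin_cases i <;> fin_cases j <;> simp [X]

lemma XP' : X * outer plus = outer plus := by
  rw [outer, mul_vecMulVec', X_mulVec_plus']

lemma PX' : outer plus * X = outer plus := by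
  have h : (outer plus * X)ᴴ = outer plus := by
    rw [conjTranspose_mul, Xherm', outer_conjT', XP']
  calc outer plus * X = ((outer plus * X)ᴴ)ᴴ := by rw [conjTranspose_conjTranspose]
    _ = outer plus := by rw [h, outer_conjT']

lemma commQH' : Commute (embedC (outer plus)) HH := by
  unfold Commute SemiconjBy embedC HH
  rw [add_mul, mul_add, ← mul_kronecker_mul, ← mul_kronecker_mul,
    ← mul_kronecker_mul, ← mul_kronecker_mul, ← mul_kronecker_mul, ← mul_kronecker_mul,
    ← mul_kronecker_mul, ← mul_kronecker_mul]
  simp only [Id2, one_mul, mul_one, XP', PX']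

lemma embed_mulVec' (P : Matrix (Fin 2) (Fin 2) ℂ) (w : Fin 2 × Fin 2 → ℂ) (v : Fin 2 → ℂ) :
    (embedC P).mulVec (joinABC w v) = joinABC w (P.mulVec v) := by
  ext ⟨a, b, c⟩
  simp [embedC, mulVec, dotProduct, Fintype.sum_prod_type, kroneckerMap_apply, Id2,
    one_apply, joinABC, Fin.sum_univ_two, Finset.mul_sum, mul_comm, mul_left_comm]
  fin_cases a <;> fin_cases b <;> simp [mul_comm] <;> ring

lemma embed_sub' : embedC (Id2 - outer plus) = 1 - embedC (outer plus) := by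
  ext ⟨a, b, c⟩ ⟨d, e, f⟩
  by_cases hab : a = d ∧ b = e
  · obtain ⟨rfl, rfl⟩ := hab
    simp [embedC, kroneckerMap_apply, Id2, one_apply, Prod.ext_iff, Matrix.sub_apply]
  · have h : ¬((a, b, c) = (d, e, f)) := by
      simp [Prod.ext_iff]; tauto
    rcases not_and_or.mp hab with h' | h' <;>
      simp [embedC, kroneckerMap_apply, Id2, one_apply, h, h', Matrix.sub_apply]

lemma embedC_herm' : (embedC (outer plus))ᴴ = embedC (outer plus) := by
  ext ⟨a, b, c⟩ ⟨d, e, f⟩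
  simp only [conjTranspose_apply, embedC, kroneckerMap_apply, Id2, one_apply,
    outer, vecMulVec_apply, Pi.star_apply, RCLike.star_def]
  by_cases h1 : a = d <;> by_cases h2 : b = e <;>
    simp [h1, h2, eq_comm, mul_comm, _root_.map_mul]

lemma joinABC_zero' (w : Fin 2 × Fin 2 → ℂ) : joinABC w 0 = 0 := by
  ext p; simp [joinABC]

lemma Q_outer_u' : embedC (outer plus) * outer (joinABC psiPlus plus)
    = outer (joinABC psiPlus plus) := by
  calc embedC (outer plus) * outer (joinABC psiPlus plus)
      = embedC (outer plus) * vecMulVec (joinABC psiPlus plus)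
          (star (joinABC psiPlus plus)) := rfl
    _ = vecMulVec ((embedC (outer plus)).mulVec (joinABC psiPlus plus))
          (star (joinABC psiPlus plus)) := mul_vecMulVec' _ _ _
    _ = outer (joinABC psiPlus plus) := by rw [embed_mulVec', P_mulVec_plus']; rfl

lemma Q_outer_v' : embedC (outer plus) * outer (joinABC phiPlus minus) = 0 := by
  calc embedC (outer plus) * outer (joinABC phiPlus minus)
      = embedC (outer plus) * vecMulVec (joinABC phiPlus minus)
          (star (joinABC phiPlus minus)) := rfl
    _ = vecMulVec ((embedC (outer plus)).mulVec (joinABC phiPlus minus))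
          (star (joinABC phiPlus minus)) := mul_vecMulVec' _ _ _
    _ = 0 := by
        rw [embed_mulVec', P_mulVec_minus', joinABC_zero']
        ext i j; simp [vecMulVec_apply]

lemma outer_u_Q' : outer (joinABC psiPlus plus) * embedC (outer plus)
    = outer (joinABC psiPlus plus) := by
  have h : (outer (joinABC psiPlus plus) * embedC (outer plus))ᴴ
      = outer (joinABC psiPlus plus) := by
    rw [conjTranspose_mul, embedC_herm', outer_conjT', Q_outer_u']
  calc outer (joinABC psiPlus plus) * embedC (outer plus)
      = ((outer (joinABC psiPlus plus) * embedC (outer plus))ᴴ)ᴴ := by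
        rw [conjTranspose_conjTranspose]
    _ = _ := by rw [h, outer_conjT']

lemma outer_v_Q' : outer (joinABC phiPlus minus) * embedC (outer plus) = 0 := by
  have h : (outer (joinABC phiPlus minus) * embedC (outer plus))ᴴ = 0 := by
    rw [conjTranspose_mul, embedC_herm', outer_conjT', Q_outer_v']
  calc outer (joinABC phiPlus minus) * embedC (outer plus)
      = ((outer (joinABC phiPlus minus) * embedC (outer plus))ᴴ)ᴴ := by
        rw [conjTranspose_conjTranspose]
    _ = 0 := by rw [h, conjTranspose_zero]

lemma meas_rho0' : measC (outer plus) rho0 = rho0 := by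
  set Q := embedC (outer plus) with hQdef
  have e1 : Q * rho0 = (1/2 : ℂ) • outer (joinABC psiPlus plus) := by
    rw [rho0, mul_add, mul_smul_comm, mul_smul_comm, Q_outer_u', Q_outer_v',
      smul_zero, add_zero]
  have e2 : rho0 * Q = (1/2 : ℂ) • outer (joinABC psiPlus plus) := by
    rw [rho0, add_mul, smul_mul_assoc, smul_mul_assoc, outer_u_Q', outer_v_Q',
      smul_zero, add_zero]
  have e4 : ((1/2 : ℂ) • outer (joinABC psiPlus plus)) * Q
      = (1/2 : ℂ) • outer (joinABC psiPlus plus) := by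
    rw [smul_mul_assoc, hQdef, outer_u_Q']
  rw [measC, embed_sub', ← hQdef]
  simp only [sub_mul, mul_sub, one_mul, mul_one, e1, e2, e4]
  abel

end Aux

theorem classical_on_C_at_all_times :
    ∀ t : ℝ, measC (outer plus) (rho t) = rho t := by
  intro t
  set Q := embedC (outer plus) with hQdef
  set E := NormedSpace.exp ((-(Complex.I * (t : ℂ))) • HH) with hE
  set E' := NormedSpace.exp ((Complex.I * (t : ℂ)) • HH) with hE'
  have h1 : Commute Q E := (commQH'.smul_right _).exp_right
  have h2 : Commute Q E' := (commQH'.smul_right _).exp_right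
  have key : ∀ R : Matrix (Fin 2 × Fin 2 × Fin 2) (Fin 2 × Fin 2 × Fin 2) ℂ,
      R * E = E * R → R * E' = E' * R → R * rho t * R = E * (R * rho0 * R) * E' := by
    intro R h h'
    calc R * rho t * R = R * E * rho0 * E' * R := by
          rw [rho, ← hE, ← hE']; simp only [mul_assoc]
      _ = E * R * rho0 * (E' * R) := by rw [h, mul_assoc]
      _ = E * R * rho0 * (R * E') := by rw [← h']
      _ = E * (R * rho0 * R) * E' := by simp only [mul_assoc]
  have hQ : Q * rho t * Q = E * (Q * rho0 * Q) * E' := key Q h1.eq h2.eq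
  have hQ' : (1 - Q) * rho t * (1 - Q) = E * ((1 - Q) * rho0 * (1 - Q)) * E' :=
    key (1 - Q) ((Commute.one_left E).sub_left h1).eq ((Commute.one_left E').sub_left h2).eq
  have := meas_rho0'
  rw [measC, embed_sub', ← hQdef] at this ⊢
  rw [hQ, hQ', ← add_mul, ← mul_add, this, rho, ← hE, ← hE']

end
end

section
/- Let H = X⊗I₂⊗X + I₂⊗X⊗X, let ρ₀ = ½|ψ₊⟩⟨ψ₊|⊗|+⟩⟨+| + ½|φ₊⟩⟨φ₊|⊗|−⟩⟨−| with ψ₊ = (|01⟩+|10⟩)/√2 and φ₊ = (|00⟩+|11⟩)/√2, and let ρ_t = exp(−itH) ρ₀ exp(itH). Then at time t = π/8 the reduced state of the probes is pure and maximally entangled: Tr_C ρ_{π/8} = |Φ⟩⟨Φ| with Φ = (|++⟩ − i|−−⟩)/√2, and moreover the single-qubit marginal Tr_B |Φ⟩⟨Φ| equals (1/2)·I₂. (Hence E_{A:B} reaches 1 at t = π/8, so the entanglement between the probes grows from 0 to 1 even though the mediator C remains classically correlated at all times; this gain is a localisation of the entanglement initially present in the partition A:BC.) -/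
/-!
STATEMENT 9: With `H = X⊗I₂⊗X + I₂⊗X⊗X`,
`ρ₀ = ½|ψ₊⟩⟨ψ₊|⊗|+⟩⟨+| + ½|φ₊⟩⟨φ₊|⊗|−⟩⟨−|` and `ρ_t = exp(−itH) ρ₀ exp(itH)`,
at `t = π/8` the reduced probe state is pure and maximally entangled:
`Tr_C ρ_{π/8} = |Φ⟩⟨Φ|` with `Φ = (|++⟩ − i|−−⟩)/√2`, and `Tr_B |Φ⟩⟨Φ| = ½·I₂`.
-/

open Matrix
open scoped Kronecker

noncomputable section

/-- Partial trace over subsystem C: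
`(Tr_C ρ)((a,b), (a',b')) = Σ_c ρ((a,b,c), (a',b',c))`. -/
def trC (ρ : Matrix (Fin 2 × Fin 2 × Fin 2) (Fin 2 × Fin 2 × Fin 2) ℂ) :
    Matrix (Fin 2 × Fin 2) (Fin 2 × Fin 2) ℂ :=
  Matrix.of fun ab ab' => ∑ c : Fin 2, ρ (ab.1, ab.2, c) (ab'.1, ab'.2, c)

/-- Partial trace over subsystem B of a two-qubit matrix:
`(Tr_B σ)(a, a') = Σ_b σ((a,b), (a',b))`. -/
def trB (σ : Matrix (Fin 2 × Fin 2) (Fin 2 × Fin 2) ℂ) : Matrix (Fin 2) (Fin 2) ℂ :=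
  Matrix.of fun a a' => ∑ b : Fin 2, σ (a, b) (a', b)

/-- `Φ = (|++⟩ − i|−−⟩)/√2`. -/
def Phi : Fin 2 × Fin 2 → ℂ :=
  ((Real.sqrt 2 : ℂ))⁻¹ • (kron2 plus plus - Complex.I • kron2 minus minus)


/-! ### Auxiliary machinery -/

abbrev s2 : ℂ := (Real.sqrt 2 : ℝ)

lemma hs2 : s2 * s2 = 2 := by
  rw [← Complex.ofReal_mul, Real.mul_self_sqrt (by norm_num)]; norm_num

lemma hs0 : s2 ≠ 0 := by
  intro h; have := hs2; rw [h] at this; simp at this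

lemma hsinv : (s2)⁻¹ = s2 / 2 := by field_simp; rw [pow_two, hs2]

lemma hpow2 : s2 ^ 2 = 2 := by rw [pow_two, hs2]
lemma hpow3 : s2 ^ 3 = 2 * s2 := by rw [pow_succ, hpow2]
lemma hpow4 : s2 ^ 4 = 4 := by
  rw [show s2 ^ 4 = (s2 * s2) * (s2 * s2) by ring, hs2]; norm_num
lemma hpow5 : s2 ^ 5 = 4 * s2 := by rw [pow_succ, hpow4]
lemma hpow6 : s2 ^ 6 = 8 := by
  rw [show s2 ^ 6 = (s2^4) * (s2 * s2) by ring, hs2, hpow4]; norm_num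

def had : Matrix (Fin 2) (Fin 2) ℂ := (s2)⁻¹ • !![1,1;1,-1]

lemma had_mul_had : had * had = 1 := by
  ext i j
  fin_cases i <;> fin_cases j <;>
    simp [had, Matrix.mul_apply, Fin.sum_univ_two, hsinv] <;> ring_nf <;>
    simp [pow_two, hs2]

def za : Fin 2 → ℂ := ![1, -1]
def Zd : Matrix (Fin 2) (Fin 2) ℂ := !![1,0;0,-1]

lemma Zd_diag : Zd = Matrix.diagonal za := by
  ext i j; fin_cases i <;> fin_cases j <;> simp [Zd, za, Matrix.diagonal]

lemma X_eq : X = had * Zd * had := by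
  ext i j
  fin_cases i <;> fin_cases j <;>
    simp [X, had, Zd, Matrix.mul_apply, Fin.sum_univ_two, hsinv] <;>
    ring_nf <;> simp [pow_two, hs2]

lemma Id2_eq : Id2 = had * 1 * had := by rw [mul_one, had_mul_had]; rfl

def W : Matrix (Fin 2 × Fin 2 × Fin 2) (Fin 2 × Fin 2 × Fin 2) ℂ := had ⊗ₖ (had ⊗ₖ had)

lemma W_mul_W : W * W = 1 := by
  rw [W, ← Matrix.mul_kronecker_mul, ← Matrix.mul_kronecker_mul, had_mul_had,
    Matrix.one_kronecker_one, Matrix.one_kronecker_one]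

lemma conjW (P Q R : Matrix (Fin 2) (Fin 2) ℂ) :
    W * (P ⊗ₖ (Q ⊗ₖ R)) * W = (had*P*had) ⊗ₖ ((had*Q*had) ⊗ₖ (had*R*had)) := by
  rw [W, ← Matrix.mul_kronecker_mul, ← Matrix.mul_kronecker_mul,
    ← Matrix.mul_kronecker_mul, ← Matrix.mul_kronecker_mul]

def dvec : Fin 2 × Fin 2 × Fin 2 → ℂ := fun p =>
  za p.1 * (1 * za p.2.2) + 1 * (za p.2.1 * za p.2.2)

lemma HH_eq : HH = W * Matrix.diagonal dvec * W := by
  have h1 : Zd ⊗ₖ ((1 : Matrix (Fin 2) (Fin 2) ℂ) ⊗ₖ Zd) +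
      (1 : Matrix (Fin 2) (Fin 2) ℂ) ⊗ₖ (Zd ⊗ₖ Zd) = Matrix.diagonal dvec := by
    rw [Zd_diag, ← Matrix.diagonal_one, Matrix.diagonal_kronecker_diagonal,
      Matrix.diagonal_kronecker_diagonal, Matrix.diagonal_kronecker_diagonal,
      Matrix.diagonal_kronecker_diagonal, Matrix.diagonal_add]
    rfl
  rw [← h1, Matrix.mul_add, Matrix.add_mul, conjW, conjW, ← X_eq, ← Id2_eq, HH]

lemma exp_smul_HH (s : ℂ) : NormedSpace.exp (s • HH) =
    W * Matrix.diagonal (fun p => Complex.exp (s * dvec p)) * W := by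
  have hU : IsUnit W := ⟨⟨W, W, W_mul_W, W_mul_W⟩, rfl⟩
  have hWi : W⁻¹ = W := Matrix.inv_eq_right_inv W_mul_W
  have h1 : s • HH = W * (Matrix.diagonal (fun p => s * dvec p)) * W⁻¹ := by
    have hd : Matrix.diagonal (fun p => s * dvec p) = s • Matrix.diagonal dvec := by
      ext i j
      by_cases h : i = j <;> simp [Matrix.diagonal, h]
    rw [hWi, HH_eq, hd, mul_smul_comm, smul_mul_assoc]
  have h2 := Matrix.exp_conj W (Matrix.diagonal (fun p => s * dvec p)) hU
  rw [h1, h2, Matrix.exp_diagonal, hWi]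
  congr 2
  rw [Pi.exp_def]
  funext p
  rw [← Complex.exp_eq_exp_ℂ]

def uvec : Fin 2 × Fin 2 × Fin 2 → ℂ := fun p =>
  ![![![0, 0], ![((1/2)), ((1/2))]],
    ![![((1/2)), ((1/2))], ![0, 0]]] p.1 p.2.1 p.2.2
def vvec : Fin 2 × Fin 2 × Fin 2 → ℂ := fun p =>
  ![![![((1/2)), ((-(1/2)))], ![0, 0]],
    ![![0, 0], ![((1/2)), ((-(1/2)))]]] p.1 p.2.1 p.2.2
def u1vec : Fin 2 × Fin 2 × Fin 2 → ℂ := fun p =>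
  ![![![((1/2)*s2), 0], ![0, 0]],
    ![![0, 0], ![((-(1/2))*s2), 0]]] p.1 p.2.1 p.2.2
def u2vec : Fin 2 × Fin 2 × Fin 2 → ℂ := fun p =>
  ![![![((1/2) + (-(1/2))*Complex.I), 0], ![0, 0]],
    ![![0, 0], ![((-(1/2)) + (-(1/2))*Complex.I), 0]]] p.1 p.2.1 p.2.2
def xuvec : Fin 2 × Fin 2 × Fin 2 → ℂ := fun p =>
  ![![![((-(1/4))*s2*Complex.I), ((-(1/4))*s2*Complex.I)], ![((1/4)*s2), ((1/4)*s2)]],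
    ![![((1/4)*s2), ((1/4)*s2)], ![((-(1/4))*s2*Complex.I), ((-(1/4))*s2*Complex.I)]]] p.1 p.2.1 p.2.2
def v1vec : Fin 2 × Fin 2 × Fin 2 → ℂ := fun p =>
  ![![![0, ((1/2)*s2)], ![0, 0]],
    ![![0, 0], ![0, ((1/2)*s2)]]] p.1 p.2.1 p.2.2
def v2vec : Fin 2 × Fin 2 × Fin 2 → ℂ := fun p =>
  ![![![0, ((1/2) + (1/2)*Complex.I)], ![0, 0]],
    ![![0, 0], ![0, ((1/2) + (-(1/2))*Complex.I)]]] p.1 p.2.1 p.2.2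
def xvvec : Fin 2 × Fin 2 × Fin 2 → ℂ := fun p =>
  ![![![((1/4)*s2), ((-(1/4))*s2)], ![((1/4)*s2*Complex.I), ((-(1/4))*s2*Complex.I)]],
    ![![((1/4)*s2*Complex.I), ((-(1/4))*s2*Complex.I)], ![((1/4)*s2), ((-(1/4))*s2)]]] p.1 p.2.1 p.2.2
def uy2vec : Fin 2 × Fin 2 × Fin 2 → ℂ := fun p =>
  ![![![((1/2) + (1/2)*Complex.I), 0], ![0, 0]],
    ![![0, 0], ![((-(1/2)) + (1/2)*Complex.I), 0]]] p.1 p.2.1 p.2.2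
def yuvec : Fin 2 × Fin 2 × Fin 2 → ℂ := fun p =>
  ![![![((1/4)*s2*Complex.I), ((1/4)*s2*Complex.I)], ![((1/4)*s2), ((1/4)*s2)]],
    ![![((1/4)*s2), ((1/4)*s2)], ![((1/4)*s2*Complex.I), ((1/4)*s2*Complex.I)]]] p.1 p.2.1 p.2.2
def vy2vec : Fin 2 × Fin 2 × Fin 2 → ℂ := fun p =>
  ![![![0, ((1/2) + (-(1/2))*Complex.I)], ![0, 0]],
    ![![0, 0], ![0, ((1/2) + (1/2)*Complex.I)]]] p.1 p.2.1 p.2.2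
def yvvec : Fin 2 × Fin 2 × Fin 2 → ℂ := fun p =>
  ![![![((1/4)*s2), ((-(1/4))*s2)], ![((-(1/4))*s2*Complex.I), ((1/4)*s2*Complex.I)]],
    ![![((-(1/4))*s2*Complex.I), ((1/4)*s2*Complex.I)], ![((1/4)*s2), ((-(1/4))*s2)]]] p.1 p.2.1 p.2.2
def enegvec : Fin 2 × Fin 2 × Fin 2 → ℂ := fun p =>
  ![![![((1/2)*s2 + (-(1/2))*s2*Complex.I), ((1/2)*s2 + (1/2)*s2*Complex.I)], ![(1), (1)]],
    ![![(1), (1)], ![((1/2)*s2 + (1/2)*s2*Complex.I), ((1/2)*s2 + (-(1/2))*s2*Complex.I)]]] p.1 p.2.1 p.2.2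
def eposvec : Fin 2 × Fin 2 × Fin 2 → ℂ := fun p =>
  ![![![((1/2)*s2 + (1/2)*s2*Complex.I), ((1/2)*s2 + (-(1/2))*s2*Complex.I)], ![(1), (1)]],
    ![![(1), (1)], ![((1/2)*s2 + (-(1/2))*s2*Complex.I), ((1/2)*s2 + (1/2)*s2*Complex.I)]]] p.1 p.2.1 p.2.2


lemma exp_eval_neg (d : ℂ) (x : ℝ) (h : -(Complex.I * ((Real.pi/8 : ℝ) : ℂ)) * d = (x : ℂ) * Complex.I) :
    Complex.exp (-(Complex.I * ((Real.pi/8 : ℝ) : ℂ)) * d)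
      = ((Real.cos x : ℝ) : ℂ) + ((Real.sin x : ℝ) : ℂ) * Complex.I := by
  rw [h, Complex.exp_mul_I, ← Complex.ofReal_cos, ← Complex.ofReal_sin]

lemma exp_eval_pos (d : ℂ) (x : ℝ) (h : Complex.I * ((Real.pi/8 : ℝ) : ℂ) * d = (x : ℂ) * Complex.I) :
    Complex.exp (Complex.I * ((Real.pi/8 : ℝ) : ℂ) * d)
      = ((Real.cos x : ℝ) : ℂ) + ((Real.sin x : ℝ) : ℂ) * Complex.I := by
  rw [h, Complex.exp_mul_I, ← Complex.ofReal_cos, ← Complex.ofReal_sin]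

lemma phase_neg : (fun p => Complex.exp ((-(Complex.I * ((Real.pi/8 : ℝ) : ℂ))) * dvec p))
    = enegvec := by
  funext p
  obtain ⟨a, b, c⟩ := p
  fin_cases a <;> fin_cases b <;> fin_cases c
  · rw [exp_eval_neg _ (-(Real.pi/4)) (by norm_num [dvec, za]; push_cast; ring)]
    simp [enegvec, Real.cos_neg, Real.sin_neg, Real.cos_pi_div_four, Real.sin_pi_div_four]
    push_cast; ring
  · rw [exp_eval_neg _ (Real.pi/4) (by norm_num [dvec, za]; push_cast; ring)]
    simp [enegvec, Real.cos_pi_div_four, Real.sin_pi_div_four]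
    push_cast; ring
  · norm_num [dvec, za, enegvec]
  · norm_num [dvec, za, enegvec]
  · norm_num [dvec, za, enegvec]
  · norm_num [dvec, za, enegvec]
  · rw [exp_eval_neg _ (Real.pi/4) (by norm_num [dvec, za]; push_cast; ring)]
    simp [enegvec, Real.cos_pi_div_four, Real.sin_pi_div_four]
    push_cast; ring
  · rw [exp_eval_neg _ (-(Real.pi/4)) (by norm_num [dvec, za]; push_cast; ring)]
    simp [enegvec, Real.cos_neg, Real.sin_neg, Real.cos_pi_div_four, Real.sin_pi_div_four]
    push_cast; ring

lemma phase_pos : (fun p => Complex.exp ((Complex.I * ((Real.pi/8 : ℝ) : ℂ)) * dvec p))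
    = eposvec := by
  funext p
  obtain ⟨a, b, c⟩ := p
  fin_cases a <;> fin_cases b <;> fin_cases c
  · rw [exp_eval_pos _ (Real.pi/4) (by norm_num [dvec, za]; push_cast; ring)]
    simp [eposvec, Real.cos_pi_div_four, Real.sin_pi_div_four]
    push_cast; ring
  · rw [exp_eval_pos _ (-(Real.pi/4)) (by norm_num [dvec, za]; push_cast; ring)]
    simp [eposvec, Real.cos_neg, Real.sin_neg, Real.cos_pi_div_four, Real.sin_pi_div_four]
    push_cast; ring
  · norm_num [dvec, za, eposvec]
  · norm_num [dvec, za, eposvec]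
  · norm_num [dvec, za, eposvec]
  · norm_num [dvec, za, eposvec]
  · rw [exp_eval_pos _ (-(Real.pi/4)) (by norm_num [dvec, za]; push_cast; ring)]
    simp [eposvec, Real.cos_neg, Real.sin_neg, Real.cos_pi_div_four, Real.sin_pi_div_four]
    push_cast; ring
  · rw [exp_eval_pos _ (Real.pi/4) (by norm_num [dvec, za]; push_cast; ring)]
    simp [eposvec, Real.cos_pi_div_four, Real.sin_pi_div_four]
    push_cast; ring

lemma hu : joinABC psiPlus plus = uvec := by
  funext p
  obtain ⟨a, b, c⟩ := p
  fin_cases a <;> fin_cases b <;> fin_cases c <;>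
    simp [joinABC, psiPlus, plus, kron2, ket0, ket1, uvec, hsinv] <;>
    ring_nf <;> (try simp [hpow2, hpow3, hpow4, hpow5, hpow6, Complex.I_sq]) <;> (try ring) <;> (try norm_num)

lemma hv : joinABC phiPlus minus = vvec := by
  funext p
  obtain ⟨a, b, c⟩ := p
  fin_cases a <;> fin_cases b <;> fin_cases c <;>
    simp [joinABC, phiPlus, minus, kron2, ket0, ket1, vvec, hsinv] <;>
    ring_nf <;> (try simp [hpow2, hpow3, hpow4, hpow5, hpow6, Complex.I_sq]) <;> (try ring) <;> (try norm_num)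

lemma hsu : star uvec = uvec := by
  funext p
  obtain ⟨a, b, c⟩ := p
  fin_cases a <;> fin_cases b <;> fin_cases c <;> simp [uvec]

lemma hsv : star vvec = vvec := by
  funext p
  obtain ⟨a, b, c⟩ := p
  fin_cases a <;> fin_cases b <;> fin_cases c <;> simp [vvec]

lemma hWu : W *ᵥ uvec = u1vec := by
  funext p
  obtain ⟨a, b, c⟩ := p
  fin_cases a <;> fin_cases b <;> fin_cases c <;>
    simp [Matrix.mulVec, dotProduct, W, had, Fintype.sum_prod_type, Fin.sum_univ_two,
      Matrix.kroneckerMap_apply, uvec, u1vec, hsinv] <;>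
    ring_nf <;> (try simp [hpow2, hpow3, hpow4, hpow5, hpow6, Complex.I_sq]) <;> (try ring) <;> (try norm_num)

lemma hDu : Matrix.diagonal enegvec *ᵥ u1vec = u2vec := by
  funext p
  obtain ⟨a, b, c⟩ := p
  fin_cases a <;> fin_cases b <;> fin_cases c <;>
    simp [Matrix.mulVec_diagonal, enegvec, u1vec, u2vec] <;>
    ring_nf <;> (try simp [hpow2, hpow3, hpow4, hpow5, hpow6, Complex.I_sq]) <;> (try ring) <;> (try norm_num)

lemma hWu2 : W *ᵥ u2vec = xuvec := by
  funext p
  obtain ⟨a, b, c⟩ := p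
  fin_cases a <;> fin_cases b <;> fin_cases c <;>
    simp [Matrix.mulVec, dotProduct, W, had, Fintype.sum_prod_type, Fin.sum_univ_two,
      Matrix.kroneckerMap_apply, u2vec, xuvec, hsinv] <;>
    ring_nf <;> (try simp [hpow2, hpow3, hpow4, hpow5, hpow6, Complex.I_sq]) <;> (try ring) <;> (try norm_num)

lemma hWv : W *ᵥ vvec = v1vec := by
  funext p
  obtain ⟨a, b, c⟩ := p
  fin_cases a <;> fin_cases b <;> fin_cases c <;>
    simp [Matrix.mulVec, dotProduct, W, had, Fintype.sum_prod_type, Fin.sum_univ_two,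
      Matrix.kroneckerMap_apply, vvec, v1vec, hsinv] <;>
    ring_nf <;> (try simp [hpow2, hpow3, hpow4, hpow5, hpow6, Complex.I_sq]) <;> (try ring) <;> (try norm_num)

lemma hDv : Matrix.diagonal enegvec *ᵥ v1vec = v2vec := by
  funext p
  obtain ⟨a, b, c⟩ := p
  fin_cases a <;> fin_cases b <;> fin_cases c <;>
    simp [Matrix.mulVec_diagonal, enegvec, v1vec, v2vec] <;>
    ring_nf <;> (try simp [hpow2, hpow3, hpow4, hpow5, hpow6, Complex.I_sq]) <;> (try ring) <;> (try norm_num)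

lemma hWv2 : W *ᵥ v2vec = xvvec := by
  funext p
  obtain ⟨a, b, c⟩ := p
  fin_cases a <;> fin_cases b <;> fin_cases c <;>
    simp [Matrix.mulVec, dotProduct, W, had, Fintype.sum_prod_type, Fin.sum_univ_two,
      Matrix.kroneckerMap_apply, v2vec, xvvec, hsinv] <;>
    ring_nf <;> (try simp [hpow2, hpow3, hpow4, hpow5, hpow6, Complex.I_sq]) <;> (try ring) <;> (try norm_num)

lemma huW : uvec ᵥ* W = u1vec := by
  funext p
  obtain ⟨a, b, c⟩ := p
  fin_cases a <;> fin_cases b <;> fin_cases c <;>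
    simp [Matrix.vecMul, dotProduct, W, had, Fintype.sum_prod_type, Fin.sum_univ_two,
      Matrix.kroneckerMap_apply, uvec, u1vec, hsinv] <;>
    ring_nf <;> (try simp [hpow2, hpow3, hpow4, hpow5, hpow6, Complex.I_sq]) <;> (try ring) <;> (try norm_num)

lemma hu1D : u1vec ᵥ* Matrix.diagonal eposvec = uy2vec := by
  funext p
  obtain ⟨a, b, c⟩ := p
  fin_cases a <;> fin_cases b <;> fin_cases c <;>
    simp [Matrix.vecMul_diagonal, eposvec, u1vec, uy2vec] <;>
    ring_nf <;> (try simp [hpow2, hpow3, hpow4, hpow5, hpow6, Complex.I_sq]) <;> (try ring) <;> (try norm_num)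

lemma huy2W : uy2vec ᵥ* W = yuvec := by
  funext p
  obtain ⟨a, b, c⟩ := p
  fin_cases a <;> fin_cases b <;> fin_cases c <;>
    simp [Matrix.vecMul, dotProduct, W, had, Fintype.sum_prod_type, Fin.sum_univ_two,
      Matrix.kroneckerMap_apply, uy2vec, yuvec, hsinv] <;>
    ring_nf <;> (try simp [hpow2, hpow3, hpow4, hpow5, hpow6, Complex.I_sq]) <;> (try ring) <;> (try norm_num)

lemma hvW : vvec ᵥ* W = v1vec := by
  funext p
  obtain ⟨a, b, c⟩ := p
  fin_cases a <;> fin_cases b <;> fin_cases c <;>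
    simp [Matrix.vecMul, dotProduct, W, had, Fintype.sum_prod_type, Fin.sum_univ_two,
      Matrix.kroneckerMap_apply, vvec, v1vec, hsinv] <;>
    ring_nf <;> (try simp [hpow2, hpow3, hpow4, hpow5, hpow6, Complex.I_sq]) <;> (try ring) <;> (try norm_num)

lemma hv1D : v1vec ᵥ* Matrix.diagonal eposvec = vy2vec := by
  funext p
  obtain ⟨a, b, c⟩ := p
  fin_cases a <;> fin_cases b <;> fin_cases c <;>
    simp [Matrix.vecMul_diagonal, eposvec, v1vec, vy2vec] <;>
    ring_nf <;> (try simp [hpow2, hpow3, hpow4, hpow5, hpow6, Complex.I_sq]) <;> (try ring) <;> (try norm_num)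

lemma hvy2W : vy2vec ᵥ* W = yvvec := by
  funext p
  obtain ⟨a, b, c⟩ := p
  fin_cases a <;> fin_cases b <;> fin_cases c <;>
    simp [Matrix.vecMul, dotProduct, W, had, Fintype.sum_prod_type, Fin.sum_univ_two,
      Matrix.kroneckerMap_apply, vy2vec, yvvec, hsinv] <;>
    ring_nf <;> (try simp [hpow2, hpow3, hpow4, hpow5, hpow6, Complex.I_sq]) <;> (try ring) <;> (try norm_num)

lemma mul_vecMulVec_mul {n : Type*} [Fintype n] (M N : Matrix n n ℂ) (x y : n → ℂ) :
    M * Matrix.vecMulVec x y * N = Matrix.vecMulVec (M *ᵥ x) (y ᵥ* N) := by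
  ext i j
  simp only [Matrix.mul_apply, Matrix.vecMulVec_apply, Matrix.mulVec, Matrix.vecMul,
    dotProduct, Finset.sum_mul, Finset.mul_sum]
  first
  | exact Finset.sum_congr rfl fun k _ => Finset.sum_congr rfl fun l _ => by ring
  | (rw [Finset.sum_comm]
     exact Finset.sum_congr rfl fun k _ => Finset.sum_congr rfl fun l _ => by ring)

lemma rho_eq : rho (Real.pi / 8) =
    (1/2 : ℂ) • Matrix.vecMulVec xuvec yuvec + (1/2 : ℂ) • Matrix.vecMulVec xvvec yvvec := by
  have e1 := exp_smul_HH (-(Complex.I * ((Real.pi/8 : ℝ) : ℂ)))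
  have e2 := exp_smul_HH (Complex.I * ((Real.pi/8 : ℝ) : ℂ))
  rw [phase_neg] at e1
  rw [phase_pos] at e2
  rw [rho, rho0, e1, e2, hu, hv]
  rw [show outer uvec = Matrix.vecMulVec uvec (star uvec) from rfl,
    show outer vvec = Matrix.vecMulVec vvec (star vvec) from rfl, hsu, hsv]
  rw [Matrix.mul_add, Matrix.add_mul, mul_smul_comm, mul_smul_comm,
    smul_mul_assoc, smul_mul_assoc]
  rw [mul_vecMulVec_mul, mul_vecMulVec_mul]
  rw [← Matrix.mulVec_mulVec, ← Matrix.mulVec_mulVec, hWu, hDu, hWu2]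
  rw [← Matrix.mulVec_mulVec, ← Matrix.mulVec_mulVec, hWv, hDv, hWv2]
  rw [← Matrix.vecMul_vecMul, ← Matrix.vecMul_vecMul, huW, hu1D, huy2W]
  rw [← Matrix.vecMul_vecMul, ← Matrix.vecMul_vecMul, hvW, hv1D, hvy2W]

def opfun : Fin 2 × Fin 2 → Fin 2 × Fin 2 → ℂ := fun p q =>
  ![![![![(1/4 : ℂ), (-(1/4))*Complex.I], ![(-(1/4))*Complex.I, 1/4]],
     ![![(1/4)*Complex.I, 1/4], ![1/4, (1/4)*Complex.I]]],
    ![![![(1/4)*Complex.I, 1/4], ![1/4, (1/4)*Complex.I]],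
     ![![(1/4 : ℂ), (-(1/4))*Complex.I], ![(-(1/4))*Complex.I, 1/4]]]] p.1 p.2 q.1 q.2

set_option maxHeartbeats 2000000 in
lemma houterPhi : outer Phi = Matrix.of opfun := by
  ext p q
  obtain ⟨a, b⟩ := p
  obtain ⟨a2, b2⟩ := q
  fin_cases a <;> fin_cases b <;> fin_cases a2 <;> fin_cases b2 <;>
    simp [outer, Phi, kron2, plus, minus, ket0, ket1, Matrix.vecMulVec_apply, opfun,
      Complex.star_def, _root_.map_sub, _root_.map_mul, _root_.map_add, Complex.conj_I, Complex.conj_ofReal,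
      hsinv] <;>
    ring_nf <;> (try simp [hpow2, hpow3, hpow4, hpow5, hpow6, Complex.I_sq]) <;> (try ring) <;> (try norm_num)

set_option maxHeartbeats 4000000
theorem probes_maximally_entangled_at_pi_over_eight :
    trC (rho (Real.pi / 8)) = outer Phi ∧ trB (outer Phi) = (1 / 2 : ℂ) • Id2 := by
  constructor
  · rw [rho_eq, houterPhi]
    ext ab ab2
    obtain ⟨a, b⟩ := ab
    obtain ⟨a2, b2⟩ := ab2
    fin_cases a <;> fin_cases b <;> fin_cases a2 <;> fin_cases b2 <;>
      simp [trC, Matrix.of_apply, Matrix.add_apply, Matrix.smul_apply, Matrix.vecMulVec_apply, smul_eq_mul,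
        xuvec, yuvec, xvvec, yvvec, opfun, Fin.sum_univ_two] <;>
      ring_nf <;> (try simp [hpow2, hpow3, hpow4, hpow5, hpow6, Complex.I_sq]) <;> (try ring) <;> (try norm_num)
  · rw [houterPhi]
    ext a a2
    fin_cases a <;> fin_cases a2 <;>
      simp [trB, opfun, Id2, Fin.sum_univ_two, Matrix.one_apply] <;>
      norm_num

end
end
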